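/- For every a > 0, f(a) = ∫₀^∞ sinh(a+t)·(sinh(2a+2t)/√(sinh²(2a+2t) - sinh²(2a)) - 1) dt is a well-defined (finite) convergent improper integral, and f(a) < K·cosh(a), where K = ∫₀¹ (1/x²)(1/√(1-x⁴) - 1) dx. -/

import Mathlib

open Real MeasureTheory

noncomputable def Kc : ℝ :=
  ∫ x in Set.Ioo (0:ℝ) 1, (1/x^2) * (1 / Real.sqrt (1 - x^4) - 1)

/-! ### Auxiliary definitions -/

noncomputable def kk (x : ℝ) : ℝ := (1/x^2) * (1 / Real.sqrt (1 - x^4) - 1)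

noncomputable def qq (c x : ℝ) : ℝ :=
  Real.sqrt ((c^2 - x^2) / ((1 - x^2) * (c^2 + (c^2-1) * x^2)))

noncomputable def GG (c x : ℝ) : ℝ := c * ((1/x^2) * (qq c x - 1))

lemma kk_meas : Measurable kk := by unfold kk; fun_prop

lemma GG_meas (c : ℝ) : Measurable (GG c) := by unfold GG qq; fun_prop

lemma kk_integrable : IntegrableOn kk (Set.Ioo (0:ℝ) 1) := by
  have hmaj : IntegrableOn (fun x : ℝ => (1 - x) ^ (-(1/2) : ℝ)) (Set.Ioo (0:ℝ) 1) := by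
    have h1 : IntervalIntegrable (fun x : ℝ => x ^ (-(1/2) : ℝ)) volume 0 1 :=
      intervalIntegral.intervalIntegrable_rpow' (by norm_num)
    have h2 := h1.comp_sub_left 1
    simp only [sub_zero, sub_self] at h2
    exact (intervalIntegrable_iff_integrableOn_Ioo_of_le (by norm_num)).mp h2.symm
  refine hmaj.mono' kk_meas.aestronglyMeasurable ?_
  rw [ae_restrict_iff' measurableSet_Ioo]
  filter_upwards with x hx
  obtain ⟨hx0, hx1⟩ := hx
  have hxp : x ^ 4 < 1 := pow_lt_one₀ hx0.le hx1 (by norm_num)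
  have hx43 : x^4 ≤ x := by
    have h3 : x^3 ≤ 1 := pow_le_one₀ hx0.le hx1.le
    calc x^4 = x * x^3 := by ring
      _ ≤ x * 1 := by nlinarith
      _ = x := mul_one x
  have hx4 : 0 < 1 - x^4 := by linarith
  have hs4 : 0 < Real.sqrt (1 - x^4) := Real.sqrt_pos.mpr hx4
  have hle1 : Real.sqrt (1 - x^4) ≤ 1 :=
    Real.sqrt_le_one.mpr (by nlinarith [pow_nonneg hx0.le 4])
  have honele : 1 ≤ 1 / Real.sqrt (1 - x^4) := by
    rw [le_div_iff₀ hs4]; linarith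
  have hknn : 0 ≤ kk x := by
    unfold kk
    apply mul_nonneg (by positivity)
    linarith
  rw [Real.norm_of_nonneg hknn]
  have hub : 1 - Real.sqrt (1 - x^4) ≤ x^4 := by
    nlinarith [Real.sq_sqrt (le_of_lt hx4), Real.sqrt_nonneg (1 - x^4)]
  have hsx : Real.sqrt (1 - x) ≤ Real.sqrt (1 - x^4) := by
    apply Real.sqrt_le_sqrt; linarith
  have hsxpos : 0 < Real.sqrt (1 - x) := Real.sqrt_pos.mpr (by linarith)
  have hrw : (1 - x) ^ (-(1/2) : ℝ) = 1 / Real.sqrt (1 - x) := by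
    rw [Real.rpow_neg (by linarith), Real.sqrt_eq_rpow]
    norm_num
  rw [hrw]
  have h1 : kk x = (1/x^2) * ((1 - Real.sqrt (1 - x^4)) / Real.sqrt (1 - x^4)) := by
    unfold kk
    rw [sub_div, div_self (ne_of_gt hs4)]
  rw [h1]
  have step2 : (1/x^2) * (x^4 / Real.sqrt (1 - x^4)) = x^2 / Real.sqrt (1 - x^4) := by
    field_simp
  calc (1/x^2) * ((1 - Real.sqrt (1 - x^4)) / Real.sqrt (1 - x^4))
      ≤ (1/x^2) * (x^4 / Real.sqrt (1 - x^4)) := by gcongr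
    _ = x^2 / Real.sqrt (1 - x^4) := step2
    _ ≤ 1 / Real.sqrt (1 - x^4) := by gcongr; nlinarith
    _ ≤ 1 / Real.sqrt (1 - x) := by gcongr

lemma qq_bounds {c x : ℝ} (hc : 1 < c) (hx0 : 0 < x) (hx1 : x < 1) :
    1 ≤ qq c x ∧ qq c x < 1 / Real.sqrt (1 - x^4) := by
  have hx2 : 0 < 1 - x^2 := by nlinarith [mul_pos (pow_pos hx0 4) (show (0:ℝ) < 1 by norm_num)]
  have hx4 : 0 < 1 - x^4 := by nlinarith [mul_pos (pow_pos hx0 4) (show (0:ℝ) < 1 by norm_num)]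
  have hc1 : 0 < c^2 - 1 := by nlinarith
  have hD : 0 < (1 - x^2) * (c^2 + (c^2-1) * x^2) := by nlinarith [mul_pos (pow_pos hx0 4) hx2]
  have hA : 0 < c^2 - x^2 := by nlinarith
  have hDA : (1 - x^2) * (c^2 + (c^2-1) * x^2) ≤ c^2 - x^2 := by
    nlinarith [mul_pos hc1 (pow_pos hx0 4)]
  constructor
  · rw [qq, Real.one_le_sqrt]
    exact (one_le_div hD).mpr hDA
  · rw [qq, show (1:ℝ) / Real.sqrt (1 - x^4) = Real.sqrt (1 / (1 - x^4)) by
      rw [one_div, one_div, Real.sqrt_inv]]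
    apply Real.sqrt_lt_sqrt (by positivity)
    rw [div_lt_div_iff₀ hD (by positivity)]
    nlinarith [mul_pos (pow_pos hx0 4) hx2]

lemma key_abstract (c s sh sa : ℝ) (hc : 1 < c) (hs : c < s)
    (hshpos : 0 < sh) (hsapos : 0 < sa)
    (hsh2 : sh^2 = s^2 - 1) (hsa2 : sa^2 = c^2 - 1) :
    |(-(c * sh) / s^2)| * GG c (c / s)
    = sh * ((2*sh*s) / Real.sqrt ((2*sh*s)^2 - (2*sa*c)^2) - 1) := by
  have hspos : (0:ℝ) < s := by linarith
  have hcpos : (0:ℝ) < c := by linarith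
  have hSpos : 0 < 2*sh*s := by positivity
  have e1 : (2*sh*s)^2 = 4 * (s^2-1) * s^2 := by rw [mul_pow, mul_pow, hsh2]; ring
  have e2 : (2*sa*c)^2 = 4 * (c^2-1) * c^2 := by rw [mul_pow, mul_pow, hsa2]; ring
  have hE : 0 < (2*sh*s)^2 - (2*sa*c)^2 := by
    rw [e1, e2]
    have hf1 : 0 < s^2 - c^2 := by nlinarith
    have hf2 : 0 < s^2 + c^2 - 1 := by nlinarith
    nlinarith [mul_pos hf1 hf2]
  have key1 : (2*sh*s) / Real.sqrt ((2*sh*s)^2 - (2*sa*c)^2)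
      = Real.sqrt ((2*sh*s)^2/((2*sh*s)^2-(2*sa*c)^2)) := by
    rw [Real.sqrt_div (sq_nonneg _), Real.sqrt_sq hSpos.le]
  have hx2pos : 0 < 1 - (c/s)^2 := by
    have : (c/s)^2 < 1 := by
      rw [div_pow, div_lt_one (by positivity)]; nlinarith
    linarith
  have h2f : 0 < c^2 + (c^2-1) * (c/s)^2 := by nlinarith [sq_nonneg (c/s)]
  have hDpos : 0 < (1 - (c/s)^2) * (c^2 + (c^2-1) * (c/s)^2) := mul_pos hx2pos h2f
  have key2 : qq c (c/s) = Real.sqrt ((2*sh*s)^2/((2*sh*s)^2-(2*sa*c)^2)) := by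
    rw [qq]
    congr 1
    rw [e1, e2]
    rw [div_eq_div_iff (ne_of_gt hDpos) (by rw [← e1, ← e2]; exact ne_of_gt hE)]
    field_simp
    ring
  rw [GG, key2, ← key1]
  have habs : |(-(c * sh) / s^2)| = c * sh / s^2 := by
    rw [abs_div, abs_neg, abs_of_pos (by positivity : (0:ℝ) < c * sh),
      abs_of_pos (by positivity : (0:ℝ) < s^2)]
  rw [habs]
  field_simp

lemma image_phi (a : ℝ) (ha : 0 < a) :
    (fun t => Real.cosh a / Real.cosh (a+t)) '' Set.Ioi 0 = Set.Ioo (0:ℝ) 1 := by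
  obtain ⟨c, hc'⟩ : ∃ c, c = Real.cosh a := ⟨_, rfl⟩
  rw [← hc']
  have hc : 1 < c := hc' ▸ Real.one_lt_cosh.mpr (ne_of_gt ha)
  ext x
  constructor
  · rintro ⟨t, ht, rfl⟩
    have ht' : (0:ℝ) < t := ht
    have hlt : c < Real.cosh (a+t) := by
      rw [hc', Real.cosh_lt_cosh, abs_of_pos ha, abs_of_pos (by linarith)]; linarith
    have hpos : (0:ℝ) < Real.cosh (a+t) := by linarith
    exact ⟨by positivity, (div_lt_one hpos).mpr hlt⟩
  · rintro ⟨hx0, hx1⟩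
    obtain ⟨b, hb'⟩ : ∃ b, b = a + 2*(c/x) := ⟨_, rfl⟩
    have hcx : c < c / x := by
      rw [lt_div_iff₀ hx0]; nlinarith
    have hcxpos : 0 < c / x := by positivity
    have hab : a ≤ b := by rw [hb']; linarith
    have hbig : c / x < Real.cosh b := by
      have h1 : (1 + b) / 2 < Real.cosh b := by
        have h0 := Real.add_one_le_exp b
        have h2 : 0 < Real.exp (-b) := Real.exp_pos _
        rw [Real.cosh_eq]
        linarith
      have h3 : c / x < (1 + b)/2 := by rw [hb']; linarith
      linarith
    have hmem : c / x ∈ Set.Icc (Real.cosh a) (Real.cosh b) := by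
      rw [← hc']
      exact ⟨le_of_lt hcx, le_of_lt hbig⟩
    have := intermediate_value_Icc hab Real.continuous_cosh.continuousOn hmem
    obtain ⟨u, hu, hcu⟩ := this
    have hua : a < u := by
      rcases lt_or_eq_of_le hu.1 with h | h
      · exact h
      · exfalso; rw [← h, ← hc'] at hcu; rw [← hcu] at hcx; exact lt_irrefl _ hcx
    refine ⟨u - a, by simpa using hua, ?_⟩
    simp only [add_sub_cancel]
    rw [hcu]
    field_simp

theorem f_integrable_and_lt (a : ℝ) (ha : 0 < a) :
    IntegrableOn (fun t : ℝ =>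
      Real.sinh (a+t) *
        (Real.sinh (2*a+2*t) / Real.sqrt (Real.sinh (2*a+2*t)^2 - Real.sinh (2*a)^2) - 1))
      (Set.Ioi (0:ℝ)) ∧
    (∫ t in Set.Ioi (0:ℝ),
      Real.sinh (a+t) *
        (Real.sinh (2*a+2*t) / Real.sqrt (Real.sinh (2*a+2*t)^2 - Real.sinh (2*a)^2) - 1))
      < Kc * Real.cosh a := by
  obtain ⟨c, hc'⟩ : ∃ c, c = Real.cosh a := ⟨_, rfl⟩
  have hc : 1 < c := hc' ▸ Real.one_lt_cosh.mpr (ne_of_gt ha)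
  have hcpos : (0:ℝ) < c := by linarith
  set F : ℝ → ℝ := fun t =>
    Real.sinh (a+t) *
      (Real.sinh (2*a+2*t) / Real.sqrt (Real.sinh (2*a+2*t)^2 - Real.sinh (2*a)^2) - 1)
    with hF'
  set φ : ℝ → ℝ := fun t => c / Real.cosh (a+t) with hφ'
  set φd : ℝ → ℝ := fun t => -(c * Real.sinh (a+t)) / Real.cosh (a+t)^2 with hφd'
  -- derivative
  have hderiv : ∀ t ∈ Set.Ioi (0:ℝ), HasDerivWithinAt φ (φd t) (Set.Ioi 0) t := by
    intro t _
    have hch : HasDerivAt (fun t : ℝ => Real.cosh (a+t)) (Real.sinh (a+t)) t := by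
      have := (Real.hasDerivAt_cosh (a+t)).comp t ((hasDerivAt_id t).const_add a)
      rw [mul_one] at this
      exact this
    have hdiv := (hasDerivAt_const t c).div hch (by positivity : (0:ℝ) < Real.cosh (a+t)).ne'
    have heq : (0 * Real.cosh (a+t) - c * Real.sinh (a+t)) / Real.cosh (a+t)^2
        = φd t := by rw [hφd']; ring
    exact (heq ▸ hdiv).hasDerivWithinAt
  -- injectivity
  have hanti : StrictAntiOn φ (Set.Ioi (0:ℝ)) := by
    intro u hu v hv huv
    have hu' : (0:ℝ) < u := hu
    have hcuv : Real.cosh (a+u) < Real.cosh (a+v) := by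
      rw [Real.cosh_lt_cosh, abs_of_pos (by linarith), abs_of_pos (by linarith)]
      linarith
    exact div_lt_div_of_pos_left hcpos (by positivity : (0:ℝ) < Real.cosh (a+u)) hcuv
  have hinj : Set.InjOn φ (Set.Ioi (0:ℝ)) := hanti.injOn
  -- image
  have himg : φ '' Set.Ioi 0 = Set.Ioo (0:ℝ) 1 := by
    rw [hφ', hc']; exact image_phi a ha
  -- pointwise identity
  have hpt : Set.EqOn (fun t => |φd t| • GG c (φ t)) F (Set.Ioi (0:ℝ)) := by
    intro t ht
    have ht' : (0:ℝ) < t := ht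
    have hs : c < Real.cosh (a+t) := by
      rw [hc', Real.cosh_lt_cosh, abs_of_pos ha, abs_of_pos (by linarith)]; linarith
    have hshpos : 0 < Real.sinh (a+t) := Real.sinh_pos_iff.mpr (by linarith)
    have hsapos : 0 < Real.sinh a := Real.sinh_pos_iff.mpr ha
    have hsh2 : Real.sinh (a+t)^2 = Real.cosh (a+t)^2 - 1 := by
      have := Real.cosh_sq (a+t); linarith
    have hsa2 : Real.sinh a^2 = c^2 - 1 := by
      have := Real.cosh_sq a; rw [← hc'] at this; linarith
    have hk := key_abstract c (Real.cosh (a+t)) (Real.sinh (a+t)) (Real.sinh a)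
      hc hs hshpos hsapos hsh2 hsa2
    have hFt : F t = Real.sinh (a+t) *
        ((2*Real.sinh (a+t)*Real.cosh (a+t)) /
          Real.sqrt ((2*Real.sinh (a+t)*Real.cosh (a+t))^2 - (2*Real.sinh a*c)^2) - 1) := by
      rw [hF']
      simp only
      rw [show 2*a+2*t = 2*(a+t) by ring, Real.sinh_two_mul, Real.sinh_two_mul, hc']
    simp only [smul_eq_mul]
    rw [hFt, ← hk, hφd', hφ']
  -- integrability of GG on Ioo 0 1
  have hckk : IntegrableOn (fun x => c * kk x) (Set.Ioo (0:ℝ) 1) := kk_integrable.const_mul c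
  have hGle : ∀ x ∈ Set.Ioo (0:ℝ) 1, 0 ≤ GG c x ∧ GG c x < c * kk x := by
    intro x hx
    obtain ⟨hx0, hx1⟩ := hx
    obtain ⟨hq1, hq2⟩ := qq_bounds hc hx0 hx1
    constructor
    · rw [GG]
      exact mul_nonneg hcpos.le (mul_nonneg (by positivity) (by linarith))
    · rw [GG, kk]
      have hxx : 0 < 1/x^2 := by positivity
      have : (1/x^2) * (qq c x - 1) < (1/x^2) * (1 / Real.sqrt (1 - x^4) - 1) := by
        apply mul_lt_mul_of_pos_left _ hxx
        linarith
      nlinarith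
  have hGint : IntegrableOn (GG c) (Set.Ioo (0:ℝ) 1) := by
    refine hckk.mono' (GG_meas c).aestronglyMeasurable ?_
    rw [ae_restrict_iff' measurableSet_Ioo]
    filter_upwards with x hx
    obtain ⟨h1, h2⟩ := hGle x hx
    rw [Real.norm_of_nonneg h1]
    exact le_of_lt h2
  -- transfer integrability
  have hiff := integrableOn_image_iff_integrableOn_abs_deriv_smul
    measurableSet_Ioi hderiv hinj (GG c)
  rw [himg] at hiff
  have hFint : IntegrableOn F (Set.Ioi (0:ℝ)) :=
    (hiff.mp hGint).congr_fun hpt measurableSet_Ioi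
  refine ⟨hFint, ?_⟩
  -- transfer integral
  have hint := integral_image_eq_integral_abs_deriv_smul
    measurableSet_Ioi hderiv hinj (GG c)
  rw [himg] at hint
  have hint2 : ∫ x in Set.Ioo (0:ℝ) 1, GG c x = ∫ t in Set.Ioi (0:ℝ), F t := by
    rw [hint]
    exact setIntegral_congr_fun measurableSet_Ioi hpt
  rw [← hint2]
  -- strict inequality
  have hKc : Kc = ∫ x in Set.Ioo (0:ℝ) 1, kk x := rfl
  have hcKc : Kc * Real.cosh a = ∫ x in Set.Ioo (0:ℝ) 1, c * kk x := by
    rw [MeasureTheory.integral_const_mul, hKc, ← hc', mul_comm]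
  rw [hcKc]
  have hdiffint : IntegrableOn (fun x => c * kk x - GG c x) (Set.Ioo (0:ℝ) 1) :=
    hckk.sub hGint
  have hpos : 0 < ∫ x in Set.Ioo (0:ℝ) 1, (c * kk x - GG c x) := by
    rw [setIntegral_pos_iff_support_of_nonneg_ae]
    · have hsub : Set.Ioo (0:ℝ) 1 ⊆
          Function.support (fun x => c * kk x - GG c x) ∩ Set.Ioo (0:ℝ) 1 := by
        intro x hx
        obtain ⟨h1, h2⟩ := hGle x hx
        refine ⟨?_, hx⟩
        show c * kk x - GG c x ≠ 0
        exact ne_of_gt (by linarith)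
      calc (0:ENNReal) < volume (Set.Ioo (0:ℝ) 1) := by simp
        _ ≤ _ := measure_mono hsub
    · refine (ae_restrict_iff' measurableSet_Ioo).mpr ?_
      filter_upwards with x hx
      have h2 := (hGle x hx).2
      show (0:ℝ) ≤ c * kk x - GG c x
      linarith
    · exact hdiffint
  have hsub := MeasureTheory.integral_sub hckk hGint
  rw [hsub] at hpos
  linarith
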